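/- Let Γ be a finite simple graph with n vertices and e edges, and let N = n(n−1)/2. If e > N − ⌊n/2⌋, then Lights Out is not universally solvable on Γ (i.e., the neighborhood matrix of Γ over 𝔽₂ is not invertible). -/
import Mathlib


open scoped Classical in
/-- The neighborhood matrix of a finite simple graph over the field `ZMod 2`:
the entry at `(i, j)` is `1` if `i = j` or `i` and `j` are adjacent, and `0` otherwise. -/
noncomputable def nbhdMatrix {V : Type} [Fintype V] [DecidableEq V] (G : SimpleGraph V) :
    Matrix V V (ZMod 2) :=
  Matrix.of fun i j => if i = j ∨ G.Adj i j then 1 else 0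

/-- Lights Out is universally solvable on a finite simple graph iff its neighborhood
matrix over `ZMod 2` is invertible. -/
def UniversallySolvable {V : Type} [Fintype V] [DecidableEq V] (G : SimpleGraph V) : Prop :=
  IsUnit (nbhdMatrix G)

/-- If a finite simple graph `Γ` with `n` vertices has more than `N - ⌊n/2⌋` edges,
where `N = n(n-1)/2`, then Lights Out is not universally solvable on `Γ`. -/
theorem not_universallySolvable_of_many_edges {V : Type} [Fintype V] [DecidableEq V]
    (G : SimpleGraph V) (n e : ℕ) (hn : Fintype.card V = n) (he : G.edgeSet.ncard = e)
    (h : n * (n - 1) / 2 - n / 2 < e) :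
    ¬ UniversallySolvable G := by
  classical
  -- the complement graph
  set H : SimpleGraph V := Gᶜ with hH
  have key : ∀ (G' : SimpleGraph V) [Fintype G'.edgeSet],
      G'.edgeSet.ncard = G'.edgeFinset.card := by
    intro G' _
    rw [← SimpleGraph.coe_edgeFinset, Set.ncard_coe_finset]
  -- edge counts
  have hsum : e + H.edgeSet.ncard = n.choose 2 := by
    have hdisj : Disjoint G.edgeSet H.edgeSet := by
      rw [SimpleGraph.disjoint_edgeSet]; exact disjoint_compl_right
    have hunion : G.edgeSet ∪ H.edgeSet = (⊤ : SimpleGraph V).edgeSet := by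
      rw [← SimpleGraph.edgeSet_sup]
      congr 1
      simp [hH]
    have hnc := Set.ncard_union_eq hdisj G.edgeSet.toFinite H.edgeSet.toFinite
    rw [hunion] at hnc
    have h2 := SimpleGraph.card_edgeFinset_top_eq_card_choose_two (V := V)
    rw [hn] at h2
    rw [← he, ← hnc, key, h2]
  have hncH : H.edgeSet.ncard = H.edgeFinset.card := key H
  have hchoose : n.choose 2 = n * (n - 1) / 2 := by
    rw [Nat.choose_two_right, Nat.mul_comm]
  -- bound complement edge count
  have he' : H.edgeFinset.card < n / 2 := by omega
  -- vertices incident to a complement edge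
  set T : Finset V := Finset.univ.filter (fun v => ∃ w, H.Adj v w) with hT
  have hTcard : T.card ≤ 2 * H.edgeFinset.card := by
    rw [← SimpleGraph.sum_degrees_eq_twice_card_edges]
    have h1 : T.card = ∑ _v ∈ T, 1 := by simp
    rw [h1]
    calc ∑ _v ∈ T, 1 ≤ ∑ v ∈ T, H.degree v := by
          apply Finset.sum_le_sum
          intro v hv
          rw [hT, Finset.mem_filter] at hv
          obtain ⟨w, hw⟩ := hv.2
          have : 0 < H.degree v := by
            rw [H.degree_pos_iff_exists_adj]; exact ⟨w, hw⟩
          omega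
      _ ≤ ∑ v, H.degree v := Finset.sum_le_sum_of_subset (Finset.subset_univ T)
  -- at least two vertices outside T
  have hn2 : n / 2 ≥ 1 := by
    by_contra hc
    push_neg at hc
    interval_cases hnn : n / 2 <;> omega
  have hTlt : T.card ≤ n - 2 := by omega
  have hcompl : 1 < Tᶜ.card := by
    have := Finset.card_compl T (α := V)
    rw [hn] at this
    have hn2' : 2 ≤ n := by omega
    omega
  obtain ⟨u, hu, v, hv, huv⟩ := Finset.one_lt_card.1 hcompl
  -- u and v are adjacent to everything else
  have hadj : ∀ x, x ∈ Tᶜ → ∀ w, x = w ∨ G.Adj x w := by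
    intro x hx w
    rw [Finset.mem_compl, hT, Finset.mem_filter] at hx
    push_neg at hx
    have := hx (Finset.mem_univ x) w
    rw [hH, SimpleGraph.compl_adj] at this
    push_neg at this
    by_cases hxw : x = w
    · exact Or.inl hxw
    · exact Or.inr (this hxw)
  -- rows u and v of the neighborhood matrix are both all-ones
  have hrow : ∀ x, x ∈ Tᶜ → nbhdMatrix G x = fun _ => 1 := by
    intro x hx
    funext j
    simp only [nbhdMatrix, Matrix.of_apply]
    rw [if_pos (hadj x hx j)]
  intro hU
  have hdet : (nbhdMatrix G).det = 0 :=
    Matrix.det_zero_of_row_eq huv ((hrow u hu).trans (hrow v hv).symm)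
  rw [UniversallySolvable, Matrix.isUnit_iff_isUnit_det, hdet] at hU
  exact (by simp : ¬ IsUnit (0 : ZMod 2)) hU
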